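/- For all fixed nonnegative integers a and b, the quantity Δ₁(n,a,b) := 2 · ∑_{j=1}^{b} H_{n+1−j−a} · (b − 1 + κ_{j−1} + κ_{b−j} − κ_b) tends to 0 as n → ∞. -/

import Mathlib

open Finset Filter Topology

/-- The `n`-th harmonic number `H_n = ∑_{i=1}^n 1/i`. -/
noncomputable def H (n : ℕ) : ℝ := ∑ i ∈ Finset.range n, (1 : ℝ) / (i + 1)

/-- `κ_n = 2(n+1)H_n - 4n`, the mean number of key comparisons for QuickSort on `n` keys. -/
noncomputable def κ (n : ℕ) : ℝ := 2 * (n + 1) * H n - 4 * n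


lemma H_succ (n : ℕ) : H (n + 1) = H n + 1 / (n + 1) := by
  simp [H, Finset.sum_range_succ]

lemma sum_kappa (b : ℕ) :
    2 * ∑ i ∈ Finset.range b, κ i + (b : ℝ) * ((b : ℝ) - 1) = b * κ b := by
  induction b with
  | zero => simp [κ, H]
  | succ b ih =>
    rw [Finset.sum_range_succ]
    set S := ∑ i ∈ Finset.range b, κ i with hS
    have h1 : ((b : ℝ) + 1) ≠ 0 := by positivity
    rw [show κ (b+1) = 2 * ((b:ℝ)+1+1) * (H b + 1/((b:ℝ)+1)) - 4*((b:ℝ)+1) by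
      simp [κ, H_succ]]
    rw [show κ b = 2 * ((b:ℝ)+1) * H b - 4*(b:ℝ) from rfl] at ih ⊢
    push_cast
    field_simp at ih ⊢
    nlinarith [ih]

lemma coeff_sum (b : ℕ) :
    ∑ j ∈ Finset.Icc 1 b, ((b : ℝ) - 1 + κ (j - 1) + κ (b - j) - κ b) = 0 := by
  have h1 : ∑ j ∈ Finset.Icc 1 b, ((b : ℝ) - 1 + κ (j - 1) + κ (b - j) - κ b)
      = ∑ i ∈ Finset.range b, ((b : ℝ) - 1 + κ i + κ (b - 1 - i) - κ b) := by
    rw [← Finset.Ico_add_one_right_eq_Icc, Finset.sum_Ico_eq_sum_range]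
    apply Finset.sum_congr (by simp)
    intro i _
    have e1 : 1 + i - 1 = i := by omega
    have e2 : b - (1 + i) = b - 1 - i := by omega
    rw [e1, e2]
  have h2 : ∑ i ∈ Finset.range b, κ (b - 1 - i) = ∑ i ∈ Finset.range b, κ i := by
    exact Finset.sum_range_reflect κ b
  have h3 := sum_kappa b
  rw [h1]
  simp only [Finset.sum_sub_distrib, Finset.sum_add_distrib, h2, Finset.sum_const,
    Finset.card_range, nsmul_eq_mul]
  linarith

lemma hdiff (d : ℕ) : Tendsto (fun n : ℕ => H (n + d) - H n) atTop (𝓝 0) := by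
  induction d with
  | zero => simp only [Nat.add_zero, sub_self]; exact tendsto_const_nhds
  | succ d ih =>
    have h1 : Tendsto (fun n : ℕ => 1 / ((n : ℝ) + d + 1)) atTop (𝓝 0) := by
      have h0 := (tendsto_one_div_add_atTop_nhds_zero_nat (𝕜 := ℝ)).comp (tendsto_add_atTop_nat d)
      apply h0.congr
      intro n
      simp only [Function.comp_apply]
      push_cast
      ring_nf
    have := ih.add h1
    rw [add_zero] at this
    apply this.congr
    intro n
    rw [show n + (d + 1) = (n + d) + 1 from rfl, H_succ]
    push_cast
    ring

theorem delta1_tendsto_zero (a b : ℕ) :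
    Filter.Tendsto
      (fun n : ℕ => 2 * ∑ j ∈ Finset.Icc 1 b,
        H (n + 1 - j - a) * ((b : ℝ) - 1 + κ (j - 1) + κ (b - j) - κ b))
      Filter.atTop (𝓝 0) := by
  have key : ∀ j ∈ Finset.Icc 1 b,
      Tendsto (fun n : ℕ => H (n + 1 - j - a) - H (n + 1 - b - a)) atTop (𝓝 0) := by
    intro j hj
    simp only [Finset.mem_Icc] at hj
    have hcomp := (hdiff (b - j)).comp (tendsto_sub_atTop_nat (a + b - 1))
    apply hcomp.congr'
    filter_upwards [eventually_ge_atTop (a + b)] with n hn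
    simp only [Function.comp_apply]
    rw [show n - (a + b - 1) + (b - j) = n + 1 - j - a by omega,
        show n - (a + b - 1) = n + 1 - b - a by omega]
  have hsum : Tendsto (fun n : ℕ => ∑ j ∈ Finset.Icc 1 b,
      (H (n + 1 - j - a) - H (n + 1 - b - a)) * ((b : ℝ) - 1 + κ (j - 1) + κ (b - j) - κ b))
      atTop (𝓝 0) := by
    have h := tendsto_finset_sum (Finset.Icc 1 b)
      (fun j hj => (key j hj).mul_const ((b : ℝ) - 1 + κ (j - 1) + κ (b - j) - κ b))
    simpa using h
  have h2 := hsum.const_mul 2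
  rw [mul_zero] at h2
  apply h2.congr
  intro n
  have h0 := coeff_sum b
  rw [Finset.sum_sub_distrib] at h0
  simp only [sub_mul, Finset.sum_sub_distrib, ← Finset.mul_sum, h0, mul_zero, sub_zero]
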